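/- arXiv:2411.00012 — 2 statements merged into one kernel-verified Lean document; each statement's English description precedes it below -/
import Mathlib

section
/- If p is a prime and n a positive integer such that p² divides ∏_{k=1}^n (k²+1), then p < 2n. -/
theorem stmt_2 (p n : ℕ) (hp : p.Prime) (hn : 0 < n)
    (h : p ^ 2 ∣ ∏ k ∈ Finset.Icc 1 n, (k ^ 2 + 1)) : p < 2 * n := by
  by_contra hlt
  push_neg at hlt
  have hpd : p ∣ ∏ k ∈ Finset.Icc 1 n, (k ^ 2 + 1) :=
    (dvd_pow_self p two_ne_zero).trans h
  obtain ⟨k, hk, hpk⟩ := hp.prime.exists_mem_finset_dvd hpd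
  have hk1 : 1 ≤ k := (Finset.mem_Icc.mp hk).1
  have hkn : k ≤ n := (Finset.mem_Icc.mp hk).2
  by_cases hsq : p ^ 2 ∣ k ^ 2 + 1
  · have h1 : p ^ 2 ≤ k ^ 2 + 1 := Nat.le_of_dvd (by positivity) hsq
    nlinarith
  · obtain ⟨m, hm⟩ := hpk
    have hpm : ¬ p ∣ m := by
      intro ⟨c, hc⟩
      exact hsq ⟨c, by rw [hm, hc]; ring⟩
    have hsplit : ∏ i ∈ Finset.Icc 1 n, (i ^ 2 + 1)
        = (k ^ 2 + 1) * ∏ i ∈ (Finset.Icc 1 n).erase k, (i ^ 2 + 1) :=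
      (Finset.mul_prod_erase _ _ hk).symm
    rw [hsplit, hm] at h
    have hpR : p ∣ ∏ i ∈ (Finset.Icc 1 n).erase k, (i ^ 2 + 1) := by
      have h2 : p * p ∣ p * (m * ∏ i ∈ (Finset.Icc 1 n).erase k, (i ^ 2 + 1)) := by
        rw [← mul_assoc]; simpa [pow_two] using h
      have h3 : p ∣ m * ∏ i ∈ (Finset.Icc 1 n).erase k, (i ^ 2 + 1) :=
        (Nat.mul_dvd_mul_iff_left hp.pos).mp h2
      exact (hp.prime.dvd_mul.mp h3).resolve_left hpm
    obtain ⟨j, hj, hpj⟩ := hp.prime.exists_mem_finset_dvd hpR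
    have hjk : j ≠ k := (Finset.mem_erase.mp hj).1
    have hj' := Finset.mem_erase.mp hj |>.2
    have hj1 : 1 ≤ j := (Finset.mem_Icc.mp hj').1
    have hjn : j ≤ n := (Finset.mem_Icc.mp hj').2
    -- work in ℤ
    have hpZ : Prime (p : ℤ) := Nat.prime_iff_prime_int.mp hp
    have hd1 : (p : ℤ) ∣ (k : ℤ) ^ 2 + 1 := by exact_mod_cast (⟨m, hm⟩ : p ∣ k ^ 2 + 1)
    have hd2 : (p : ℤ) ∣ (j : ℤ) ^ 2 + 1 := by exact_mod_cast hpj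
    have hdiff : (p : ℤ) ∣ ((k : ℤ) - j) * ((k : ℤ) + j) := by
      have : ((k : ℤ) - j) * ((k : ℤ) + j) = ((k : ℤ) ^ 2 + 1) - ((j : ℤ) ^ 2 + 1) := by ring
      rw [this]
      exact dvd_sub hd1 hd2
    rcases hpZ.dvd_mul.mp hdiff with hc | hc
    · have hne : (k : ℤ) - j ≠ 0 := by
        intro h0
        exact hjk (by exact_mod_cast (sub_eq_zero.mp h0).symm)
      have hle := Int.le_of_dvd (abs_pos.mpr hne) ((dvd_abs _ _).mpr hc)
      have habs : |(k : ℤ) - j| < p := by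
        rw [abs_sub_lt_iff]
        constructor <;> push_cast <;> omega
      omega
    · have hle : (p : ℤ) ≤ (k : ℤ) + j := Int.le_of_dvd (by positivity) hc
      have : k + j < 2 * n := by
        rcases Nat.lt_or_ge k n with h' | h'
        · omega
        · have hkn' : k = n := le_antisymm hkn h'
          have : j < n := lt_of_le_of_ne hjn (by omega)
          omega
      have : (p : ℤ) < 2 * n := by push_cast; omega
      omega
end

section
/- If p is a prime with p > n, then the p-adic valuation of ∏_{k=1}^n (k²+1) is at most 2. -/
theorem stmt_13 (p n : ℕ) (hp : p.Prime) (hn : 0 < n) (hpn : n < p) :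
    (∏ k ∈ Finset.Icc 1 n, (k ^ 2 + 1)).factorization p ≤ 2 := by
  haveI : Fact p.Prime := ⟨hp⟩
  rw [Nat.factorization_prod (fun k _ => by positivity)]
  rw [Finsupp.finset_sum_apply]
  set S := (Finset.Icc 1 n).filter (fun k => p ∣ k ^ 2 + 1) with hS
  have hsum : ∑ k ∈ Finset.Icc 1 n, (k ^ 2 + 1).factorization p
      = ∑ k ∈ S, (k ^ 2 + 1).factorization p := by
    rw [hS, Finset.sum_filter_of_ne]
    intro k hk hne
    by_contra hdvd
    exact hne (Nat.factorization_eq_zero_of_not_dvd hdvd)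
  rw [hsum]
  have hterm : ∀ k ∈ S, (k ^ 2 + 1).factorization p ≤ 1 := by
    intro k hk
    have hk' : k ≤ n := (Finset.mem_Icc.mp (Finset.mem_filter.mp hk).1).2
    have hlt : k ^ 2 + 1 < p ^ 2 := by nlinarith
    by_contra h
    push_neg at h
    have : p ^ 2 ∣ k ^ 2 + 1 :=
      (Nat.Prime.pow_dvd_iff_le_factorization hp (by positivity)).mpr h
    exact absurd (Nat.le_of_dvd (by positivity) this) (not_le.mpr hlt)
  have hcard : S.card ≤ 2 := by
    have hdeg : (Polynomial.X ^ 2 + 1 : Polynomial (ZMod p)).natDegree = 2 := by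
      compute_degree!
    have hpoly : (Polynomial.X ^ 2 + 1 : Polynomial (ZMod p)) ≠ 0 := by
      intro h
      rw [h] at hdeg
      simp at hdeg
    have hinj : Set.InjOn (fun k : ℕ => (k : ZMod p)) S := by
      intro a ha b hb hab
      have ha' := (Finset.mem_Icc.mp (Finset.mem_filter.mp ha).1).2
      have hb' := (Finset.mem_Icc.mp (Finset.mem_filter.mp hb).1).2
      have := congrArg ZMod.val hab
      rwa [ZMod.val_cast_of_lt (lt_of_le_of_lt ha' hpn),
        ZMod.val_cast_of_lt (lt_of_le_of_lt hb' hpn)] at this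
    have hmaps : ∀ k ∈ S, (k : ZMod p) ∈
        (Polynomial.X ^ 2 + 1 : Polynomial (ZMod p)).roots.toFinset := by
      intro k hk
      have hdvd : p ∣ k ^ 2 + 1 := (Finset.mem_filter.mp hk).2
      rw [Multiset.mem_toFinset, Polynomial.mem_roots hpoly]
      simp only [Polynomial.IsRoot, Polynomial.eval_add, Polynomial.eval_pow,
        Polynomial.eval_X, Polynomial.eval_one]
      have : ((k ^ 2 + 1 : ℕ) : ZMod p) = 0 :=
        (ZMod.natCast_eq_zero_iff _ _).mpr hdvd
      push_cast at this
      exact this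
    calc S.card ≤ ((Polynomial.X ^ 2 + 1 : Polynomial (ZMod p)).roots.toFinset).card :=
          Finset.card_le_card_of_injOn _ hmaps hinj
      _ ≤ Multiset.card (Polynomial.X ^ 2 + 1 : Polynomial (ZMod p)).roots :=
          Multiset.toFinset_card_le _
      _ ≤ 2 := by
          have := Polynomial.card_roots' (Polynomial.X ^ 2 + 1 : Polynomial (ZMod p))
          rwa [hdeg] at this
  have h2 := Finset.sum_le_card_nsmul S (fun k => (k ^ 2 + 1).factorization p) 1 hterm
  simp only [smul_eq_mul, mul_one] at h2
  omega
end
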